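/- arXiv:2411.16117 — 2 statements merged into one kernel-verified Lean document; each statement's English description precedes it below -/
import Mathlib

section
/- For the one-dimensional Gaussian mechanism M(D) = f(D) + N(0, σ²) with sensitivity Δ = sup over adjacent pairs |f(D) - f(D')|, if ε ∈ (0,1), δ ∈ (0,1), and σ ≥ Δ·√(2·ln(1.25/δ))/ε, then M is (ε, δ)-differentially private. -/
open MeasureTheory ProbabilityTheory

section AuxGaussianDP

open Real Set NNReal

lemma gauss_tail_right (μ σ t : ℝ) (hσ : 0 < σ) (ht : 0 ≤ t) :
    gaussianReal μ (σ^2).toNNReal (Set.Ioi (μ + σ*t)) ≤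
      ENNReal.ofReal (Real.exp (-t^2/2) / 2) := by
  have hv : (σ^2).toNNReal ≠ 0 := by
    simp [Real.toNNReal_eq_zero, not_le]; positivity
  have hvr : ((σ^2).toNNReal : ℝ) = σ^2 := Real.coe_toNNReal _ (sq_nonneg σ)
  rw [gaussianReal_apply_eq_integral _ hv]
  apply ENNReal.ofReal_le_ofReal
  have himg : (fun u : ℝ => (μ + σ*t) + σ*u) '' Set.Ioi 0 = Set.Ioi (μ + σ*t) := by
    ext x
    constructor
    · rintro ⟨u, hu, rfl⟩
      simp only [Set.mem_Ioi] at *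
      nlinarith
    · intro hx
      refine ⟨(x - (μ + σ*t))/σ, ?_, ?_⟩
      · simp only [Set.mem_Ioi] at *
        exact div_pos (by linarith) hσ
      · field_simp
        ring
  have hderiv : ∀ u : ℝ, HasDerivAt (fun u : ℝ => (μ + σ*t) + σ*u) σ u := by
    intro u
    simpa using ((hasDerivAt_id u).const_mul σ).const_add (μ + σ*t)
  have hcov : ∫ x in Set.Ioi (μ + σ*t), gaussianPDFReal μ (σ^2).toNNReal x
      = ∫ u in Set.Ioi (0:ℝ), σ * gaussianPDFReal μ (σ^2).toNNReal ((μ + σ*t) + σ*u) := by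
    rw [← himg, integral_image_eq_integral_abs_deriv_smul measurableSet_Ioi
      (f' := fun _ => σ) (fun u _ => (hderiv u).hasDerivWithinAt)
      (fun a _ b _ h => mul_left_cancel₀ hσ.ne' (by linarith))]
    simp [abs_of_pos hσ, smul_eq_mul]
  rw [hcov]
  have hpdf : ∀ u : ℝ, 0 < u → σ * gaussianPDFReal μ (σ^2).toNNReal ((μ + σ*t) + σ*u)
      ≤ (Real.exp (-t^2/2) * (Real.sqrt (2*π))⁻¹) * Real.exp (-(1/2) * u^2) := by
    intro u hu
    rw [gaussianPDFReal]
    have h2 : Real.sqrt (2 * π * ((σ^2).toNNReal : ℝ)) = σ * Real.sqrt (2*π) := by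
      rw [hvr, mul_comm (2*π), Real.sqrt_mul (sq_nonneg σ), Real.sqrt_sq hσ.le]
    rw [h2]
    have hexp : Real.exp (-(μ + σ*t + σ*u - μ)^2 / (2 * ((σ^2).toNNReal : ℝ)))
        = Real.exp (-(t+u)^2/2) := by
      rw [hvr]; congr 1; field_simp; ring
    rw [hexp]
    have hle : Real.exp (-(t+u)^2/2) ≤ Real.exp (-t^2/2) * Real.exp (-(1/2) * u^2) := by
      rw [← Real.exp_add]
      apply Real.exp_le_exp.mpr
      nlinarith
    have hpos : (0:ℝ) < Real.sqrt (2*π) := Real.sqrt_pos.mpr (by positivity)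
    calc σ * ((σ * Real.sqrt (2*π))⁻¹ * Real.exp (-(t+u)^2/2))
        = (Real.sqrt (2*π))⁻¹ * Real.exp (-(t+u)^2/2) := by
          field_simp
      _ ≤ (Real.sqrt (2*π))⁻¹ * (Real.exp (-t^2/2) * Real.exp (-(1/2) * u^2)) := by
          apply mul_le_mul_of_nonneg_left hle (by positivity)
      _ = (Real.exp (-t^2/2) * (Real.sqrt (2*π))⁻¹) * Real.exp (-(1/2) * u^2) := by ring
  have hint : ∫ u in Set.Ioi (0:ℝ), σ * gaussianPDFReal μ (σ^2).toNNReal ((μ + σ*t) + σ*u)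
      ≤ ∫ u in Set.Ioi (0:ℝ), (Real.exp (-t^2/2) * (Real.sqrt (2*π))⁻¹) * Real.exp (-(1/2) * u^2) := by
    apply setIntegral_mono_on
    · exact ((((integrable_gaussianPDFReal μ (σ^2).toNNReal).comp_add_left
        (μ + σ*t)).comp_mul_left' hσ.ne').const_mul σ).integrableOn
    · exact (((integrable_exp_neg_mul_sq (by norm_num : (0:ℝ) < 1/2)).const_mul _)).integrableOn
    · exact measurableSet_Ioi
    · intro u hu; exact hpdf u hu
  refine hint.trans (le_of_eq ?_)
  rw [MeasureTheory.integral_const_mul, integral_gaussian_Ioi]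
  have h3 : (π / (1/2) : ℝ) = 2 * π := by ring
  rw [h3]
  have hpos : (0:ℝ) < Real.sqrt (2*π) := Real.sqrt_pos.mpr (by positivity)
  field_simp

lemma gauss_tail_right_neg (μ σ t : ℝ) (hσ : 0 < σ) (ht : t ≤ 0) :
    gaussianReal μ (σ^2).toNNReal (Set.Ioi (μ + σ*t)) ≤
      ENNReal.ofReal (1/2 - t / Real.sqrt (2*π)) := by
  have hv : (σ^2).toNNReal ≠ 0 := by
    simp [Real.toNNReal_eq_zero, not_le]; positivity
  have hvr : ((σ^2).toNNReal : ℝ) = σ^2 := Real.coe_toNNReal _ (sq_nonneg σ)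
  have hst : σ * t ≤ 0 := mul_nonpos_of_nonneg_of_nonpos hσ.le ht
  have hsub : Set.Ioi (μ + σ*t) ⊆ Set.Ioc (μ + σ*t) μ ∪ Set.Ioi μ := by
    intro x hx
    simp only [Set.mem_Ioi, Set.mem_union, Set.mem_Ioc] at *
    by_cases h : x ≤ μ
    · exact Or.inl ⟨hx, h⟩
    · exact Or.inr (by linarith)
  refine (measure_mono hsub).trans ((measure_union_le _ _).trans ?_)
  have hpos : (0:ℝ) < Real.sqrt (2*π) := Real.sqrt_pos.mpr (by positivity)
  have h1 : gaussianReal μ (σ^2).toNNReal (Set.Ioi μ) ≤ ENNReal.ofReal (1/2) := by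
    have := gauss_tail_right μ σ 0 hσ le_rfl
    simpa using this
  have h2 : gaussianReal μ (σ^2).toNNReal (Set.Ioc (μ + σ*t) μ)
      ≤ ENNReal.ofReal (-t / Real.sqrt (2*π)) := by
    rw [gaussianReal_apply_eq_integral _ hv]
    apply ENNReal.ofReal_le_ofReal
    have hC : ∀ x ∈ Set.Ioc (μ + σ*t) μ, gaussianPDFReal μ (σ^2).toNNReal x
        ≤ (σ * Real.sqrt (2*π))⁻¹ := by
      intro x _
      rw [gaussianPDFReal]
      have h2' : Real.sqrt (2 * π * ((σ^2).toNNReal : ℝ)) = σ * Real.sqrt (2*π) := by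
        rw [hvr, mul_comm (2*π), Real.sqrt_mul (sq_nonneg σ), Real.sqrt_sq hσ.le]
      rw [h2']
      have : Real.exp (-(x - μ)^2 / (2 * ((σ^2).toNNReal : ℝ))) ≤ 1 := by
        apply Real.exp_le_one_iff.mpr
        rw [hvr]
        apply div_nonpos_of_nonpos_of_nonneg <;> nlinarith
      nlinarith [inv_pos.mpr (mul_pos hσ hpos), this]
    calc ∫ x in Set.Ioc (μ + σ*t) μ, gaussianPDFReal μ (σ^2).toNNReal x
        ≤ ∫ _x in Set.Ioc (μ + σ*t) μ, (σ * Real.sqrt (2*π))⁻¹ := by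
          apply setIntegral_mono_on
          · exact (integrable_gaussianPDFReal _ _).integrableOn
          · exact integrableOn_const measure_Ioc_lt_top.ne
          · exact measurableSet_Ioc
          · exact hC
      _ = (volume (Set.Ioc (μ + σ*t) μ)).toReal * (σ * Real.sqrt (2*π))⁻¹ := by
          rw [setIntegral_const]; rfl
      _ = (-(σ*t)) * (σ * Real.sqrt (2*π))⁻¹ := by
          rw [Real.volume_Ioc, ENNReal.toReal_ofReal (by linarith)]
          ring_nf
      _ = -t / Real.sqrt (2*π) := by
          field_simp
  calc gaussianReal μ (σ^2).toNNReal (Set.Ioc (μ + σ*t) μ)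
        + gaussianReal μ (σ^2).toNNReal (Set.Ioi μ)
      ≤ ENNReal.ofReal (-t / Real.sqrt (2*π)) + ENNReal.ofReal (1/2) := add_le_add h2 h1
    _ = ENNReal.ofReal (1/2 - t / Real.sqrt (2*π)) := by
        rw [← ENNReal.ofReal_add (div_nonneg (neg_nonneg.mpr ht) (le_of_lt hpos)) (by norm_num)]
        congr 1
        ring

lemma gauss_sym (μ : ℝ) (v : ℝ≥0) (r : ℝ) :
    gaussianReal μ v (Set.Iio (μ - r)) = gaussianReal μ v (Set.Ioi (μ + r)) := by
  have hone : (NNReal.mk ((-1:ℝ)^2) (sq_nonneg _)) = 1 := by ext; norm_num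
  have hmul := gaussianReal_map_const_mul (μ := μ) (v := v) (-1)
  rw [hone, one_mul] at hmul
  have h1 : (gaussianReal μ v).map (fun x => 2*μ - x) = gaussianReal μ v := by
    have hcomp : (fun x : ℝ => 2*μ - x) = ((· + 2*μ) ∘ fun x : ℝ => (-1:ℝ)*x) := by
      ext x; simp; ring
    rw [hcomp, ← Measure.map_map (measurable_add_const _) (measurable_const_mul _), hmul,
      gaussianReal_map_add_const]
    congr 1
    ring
  calc gaussianReal μ v (Set.Iio (μ - r))
      = ((gaussianReal μ v).map (fun x => 2*μ - x)) (Set.Iio (μ - r)) := by rw [h1]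
    _ = gaussianReal μ v ((fun x => 2*μ - x) ⁻¹' (Set.Iio (μ - r))) :=
        Measure.map_apply (measurable_const.sub measurable_id) measurableSet_Iio
    _ = gaussianReal μ v (Set.Ioi (μ + r)) := by
        congr 1
        ext x
        simp only [Set.mem_preimage, Set.mem_Iio, Set.mem_Ioi]
        constructor <;> intro h <;> linarith


lemma bad_subset (μ μ' σ ε : ℝ) (hσ0 : 0 < σ) (x : ℝ)
    (hx : Real.exp ε * gaussianPDFReal μ' (σ^2).toNNReal x
      < gaussianPDFReal μ (σ^2).toNNReal x) :
    2*σ^2*ε < (x - μ')^2 - (x - μ)^2 := by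
  have hvr : (((σ^2).toNNReal : ℝ≥0) : ℝ) = σ^2 := Real.coe_toNNReal _ (sq_nonneg σ)
  rw [gaussianPDFReal, gaussianPDFReal, hvr] at hx
  have hC : (0:ℝ) < (Real.sqrt (2 * π * σ^2))⁻¹ := by positivity
  have hx2 : Real.exp ε * Real.exp (-(x - μ')^2 / (2*σ^2))
      < Real.exp (-(x - μ)^2 / (2*σ^2)) := by
    refine (mul_lt_mul_iff_right₀ hC).mp ?_
    calc (Real.sqrt (2 * π * σ^2))⁻¹ * (Real.exp ε * Real.exp (-(x - μ')^2 / (2*σ^2)))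
        = Real.exp ε * ((Real.sqrt (2 * π * σ^2))⁻¹ * Real.exp (-(x - μ')^2 / (2*σ^2))) := by
          ring
      _ < _ := hx
  rw [← Real.exp_add] at hx2
  have hlt := (Real.exp_lt_exp).mp hx2
  have hq0 : (0:ℝ) < 2*σ^2 := by positivity
  have h3 : (ε + -(x - μ')^2 / (2*σ^2)) * (2*σ^2)
      < (-(x - μ)^2 / (2*σ^2)) * (2*σ^2) :=
    mul_lt_mul_of_pos_right hlt hq0
  have h4 : (ε + -(x - μ')^2 / (2*σ^2)) * (2*σ^2) = 2*σ^2*ε - (x - μ')^2 := by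
    field_simp
    ring
  have h5 : (-(x - μ)^2 / (2*σ^2)) * (2*σ^2) = -(x - μ)^2 := by
    field_simp
  rw [h4, h5] at h3
  linarith

lemma dp_split (μ μ' : ℝ) (v : ℝ≥0) (hv : v ≠ 0) (ε δ : ℝ) (s : Set ℝ)
    (hbad : gaussianReal μ v
      {x | Real.exp ε * gaussianPDFReal μ' v x < gaussianPDFReal μ v x}
      ≤ ENNReal.ofReal δ) :
    gaussianReal μ v s ≤ ENNReal.ofReal (Real.exp ε) * gaussianReal μ' v s
      + ENNReal.ofReal δ := by
  set A := {x : ℝ | gaussianPDFReal μ v x ≤ Real.exp ε * gaussianPDFReal μ' v x} with hAdef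
  have hAc : Aᶜ = {x | Real.exp ε * gaussianPDFReal μ' v x < gaussianPDFReal μ v x} := by
    ext x; simp [hAdef, not_le]
  have hsplit : gaussianReal μ v s
      ≤ gaussianReal μ v (s ∩ A) + gaussianReal μ v Aᶜ := by
    refine (measure_mono ?_).trans (measure_union_le _ _)
    intro x hx
    by_cases h : x ∈ A
    · exact Or.inl ⟨hx, h⟩
    · exact Or.inr h
  have hA : gaussianReal μ v (s ∩ A)
      ≤ ENNReal.ofReal (Real.exp ε) * gaussianReal μ' v s := by
    rw [gaussianReal_apply _ hv, gaussianReal_apply _ hv]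
    calc ∫⁻ x in s ∩ A, gaussianPDF μ v x
        ≤ ∫⁻ x in s ∩ A, ENNReal.ofReal (Real.exp ε) * gaussianPDF μ' v x := by
          apply setLIntegral_mono ((measurable_gaussianPDF _ _).const_mul _)
          intro x hx
          rw [gaussianPDF, gaussianPDF, ← ENNReal.ofReal_mul (Real.exp_nonneg ε)]
          exact ENNReal.ofReal_le_ofReal hx.2
      _ = ENNReal.ofReal (Real.exp ε) * ∫⁻ x in s ∩ A, gaussianPDF μ' v x :=
          lintegral_const_mul _ (measurable_gaussianPDF _ _)
      _ ≤ ENNReal.ofReal (Real.exp ε) * ∫⁻ x in s, gaussianPDF μ' v x := by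
          gcongr
          exact Set.inter_subset_left
  calc gaussianReal μ v s ≤ gaussianReal μ v (s ∩ A) + gaussianReal μ v Aᶜ := hsplit
    _ ≤ ENNReal.ofReal (Real.exp ε) * gaussianReal μ' v s + ENNReal.ofReal δ := by
        apply add_le_add hA
        rw [hAc]
        exact hbad

private lemma exp_half_le : Real.exp (1/2 : ℝ) ≤ 5/2 := by
  have hsq : Real.exp (1/2:ℝ) * Real.exp (1/2:ℝ) = Real.exp 1 := by
    rw [← Real.exp_add]; norm_num
  nlinarith [Real.exp_pos (1/2:ℝ), Real.exp_one_lt_d9]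

private lemma sqrt_two_pi_ge : (5/2:ℝ) ≤ Real.sqrt (2*Real.pi) := by
  rw [show (5/2:ℝ) = Real.sqrt ((5/2)^2) from (Real.sqrt_sq (by norm_num)).symm]
  apply Real.sqrt_le_sqrt
  nlinarith [Real.pi_gt_d6]

private lemma numT (c ε t : ℝ) (hc0 : 0 < c) (ht0' : 0 ≤ c - ε/(2*c))
    (ht_ge : c - ε/(2*c) ≤ t) : c^2 - ε ≤ t^2 := by
  have hdiv : c * (ε/(2*c)) = ε/2 := by field_simp
  nlinarith [pow_le_pow_left₀ ht0' ht_ge 2, sq_nonneg (ε/(2*c))]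

private lemma numA (L t ε δ : ℝ) (hε1 : ε < 1) (hδ0 : 0 < δ)
    (hnegL : Real.exp (-L) * 5 = δ * 4) (ht2 : 2*L - ε ≤ t^2) :
    Real.exp (-t^2/2)/2 ≤ δ := by
  have h6 : Real.exp (-t^2/2) = Real.exp (L - t^2/2) * Real.exp (-L) := by
    rw [← Real.exp_add]; ring_nf
  have h8 : Real.exp (L - t^2/2) ≤ Real.exp (1/2:ℝ) :=
    Real.exp_le_exp.mpr (by linarith)
  rw [h6]
  nlinarith [Real.exp_pos (-L), mul_le_mul_of_nonneg_right
    (h8.trans exp_half_le) (Real.exp_pos (-L)).le]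

private lemma numB1 (δ L : ℝ) (hnegL : Real.exp (-L) * 5 = δ * 4) (hcase : 4*L < 1) :
    15/16 ≤ δ := by
  nlinarith [Real.add_one_le_exp (-L)]

private lemma numB2 (t c ε δ : ℝ) (hc0 : 0 < c) (hc6 : 3/5 ≤ c) (hε1 : ε < 1)
    (hε0 : 0 < ε) (ht_ge : c - ε/(2*c) ≤ t) (hδ15 : 15/16 ≤ δ) :
    1/2 - t/Real.sqrt (2*Real.pi) ≤ δ := by
  have hπ0 : (0:ℝ) < Real.sqrt (2*Real.pi) := by linarith [sqrt_two_pi_ge]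
  have h1 : ε/(2*c) ≤ 1/(2*c) := by gcongr
  have h2 : (1:ℝ)/(2*c) ≤ 5/6 := by
    rw [div_le_iff₀ (by positivity : (0:ℝ) < 2*c)]
    linarith
  have h1c : -t ≤ 5/6 := by linarith
  have hfin : -t/Real.sqrt (2*Real.pi) ≤ (5/6)/(5/2) :=
    div_le_div₀ (by norm_num) h1c (by norm_num) sqrt_two_pi_ge
  rw [neg_div] at hfin
  linarith

private lemma numLlog (δ L : ℝ) (hδ0 : 0 < δ) (hδ1 : δ < 1)
    (hL : L = Real.log (1.25/δ)) : 1/5 ≤ L := by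
  have h45 : Real.log (4/5:ℝ) ≤ 4/5 - 1 := Real.log_le_sub_one_of_pos (by norm_num)
  have h125 : Real.log (1.25:ℝ) = - Real.log (4/5:ℝ) := by
    rw [show (1.25:ℝ) = ((4:ℝ)/5)⁻¹ by norm_num, Real.log_inv]
  have hmono : Real.log (1.25:ℝ) ≤ L := by
    rw [hL]
    apply Real.log_le_log (by norm_num)
    rw [le_div_iff₀ hδ0]; nlinarith
  linarith


private lemma sub1 (b σ ε t x μ : ℝ) (hb0 : 0 < b) (hσ0 : 0 < σ)
    (hσt : σ*t = σ^2*ε/b - b/2) (h : 2*σ^2*ε < b^2 + 2*b*(x-μ)) : μ + σ*t < x := by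
  have hbb : b * (σ^2*ε/b) = σ^2*ε := by field_simp
  nlinarith [hbb, hσt]

private lemma sub2 (b σ ε t x μ : ℝ) (hb0 : 0 < b) (hσ0 : 0 < σ)
    (hσt : σ*t = σ^2*ε/b - b/2) (h : 2*σ^2*ε < b^2 - 2*b*(x-μ)) : x < μ - σ*t := by
  have hbb : b * (σ^2*ε/b) = σ^2*ε := by field_simp
  nlinarith [hbb, hσt]


end AuxGaussianDP

/-- `(ε, δ)`-differential privacy of a randomized mechanism `M`. -/
def IsDP {D S : Type*} [MeasurableSpace S] (adj : D → D → Prop)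
    (M : D → Measure S) (ε δ : ℝ) : Prop :=
  ∀ s : Set S, MeasurableSet s → ∀ d d' : D, adj d d' →
    M d s ≤ ENNReal.ofReal (Real.exp ε) * M d' s + ENNReal.ofReal δ

/-- The one-dimensional Gaussian mechanism `M(D) = f(D) + N(0, σ²)`
(i.e. a Gaussian with mean `f(D)` and variance `σ²`) with sensitivity `Δ`
is `(ε, δ)`-differentially private whenever `ε, δ ∈ (0,1)` and
`σ ≥ Δ·√(2·ln(1.25/δ))/ε`. -/
theorem gaussian_mechanism {D : Type*} (adj : D → D → Prop)
    (f : D → ℝ) (Δ σ ε δ : ℝ)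
    (hΔ : ∀ d d' : D, adj d d' → |f d - f d'| ≤ Δ)
    (hε : ε ∈ Set.Ioo (0 : ℝ) 1) (hδ : δ ∈ Set.Ioo (0 : ℝ) 1)
    (hσ : σ ≥ Δ * Real.sqrt (2 * Real.log (1.25 / δ)) / ε) :
    IsDP adj (fun d => gaussianReal (f d) (σ ^ 2).toNNReal) ε δ := by
  obtain ⟨hε0, hε1⟩ := hε
  obtain ⟨hδ0, hδ1⟩ := hδ
  have hexpε : (1:ℝ) ≤ Real.exp ε := by
    have := Real.add_one_le_exp ε; linarith
  intro s hs d d' hadj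
  simp only
  by_cases heq : f d = f d'
  · rw [heq]
    calc gaussianReal (f d') (σ^2).toNNReal s
        = 1 * gaussianReal (f d') (σ^2).toNNReal s := (one_mul _).symm
      _ ≤ ENNReal.ofReal (Real.exp ε) * gaussianReal (f d') (σ^2).toNNReal s := by
          gcongr
          exact ENNReal.one_le_ofReal.mpr hexpε
      _ ≤ _ := le_self_add
  · set μ := f d with hμdef
    set μ' := f d' with hμ'def
    have hab : |μ - μ'| ≤ Δ := hΔ d d' hadj
    clear_value μ μ'
    clear hμdef hμ'def
    set b := |μ - μ'| with hbdef
    have hb0 : 0 < b := abs_pos.mpr (sub_ne_zero.mpr heq)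
    clear_value b
    have hΔ0 : 0 < Δ := lt_of_lt_of_le hb0 hab
    set L := Real.log (1.25/δ) with hLdef
    have hL0 : 0 < L := Real.log_pos (by rw [lt_div_iff₀ hδ0]; linarith)
    have hexpL : Real.exp L = 1.25/δ := Real.exp_log (by positivity)
    clear_value L
    set c := Real.sqrt (2*L) with hcdef
    have hc0 : 0 < c := Real.sqrt_pos.mpr (by linarith)
    have hc2 : c^2 = 2*L := Real.sq_sqrt (by linarith)
    clear_value c
    have hσc : Δ * c / ε ≤ σ := hσ
    have hσ0 : 0 < σ := lt_of_lt_of_le (by positivity) hσc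
    have hεσ : Δ * c ≤ σ * ε := by
      rw [div_le_iff₀ hε0] at hσc; linarith
    have hv : (σ^2).toNNReal ≠ 0 := by
      simp only [ne_eq, Real.toNNReal_eq_zero, not_le]; positivity
    set t := σ*ε/b - b/(2*σ) with htdef
    have ht_ge : c - ε/(2*c) ≤ t := by
      have h1 : c ≤ σ*ε/b := by
        rw [le_div_iff₀ hb0]; nlinarith
      have h2 : b/(2*σ) ≤ ε/(2*c) := by
        rw [div_le_div_iff₀ (by positivity) (by positivity)]; nlinarith
      rw [htdef]; linarith
    have hσt : σ * t = σ^2*ε/b - b/2 := by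
      rw [htdef]; field_simp
    clear_value t
    have hexpnegL : Real.exp (-L) * 5 = δ * 4 := by
      rw [Real.exp_neg, hexpL]
      field_simp
      ring
    have hnum : gaussianReal μ (σ^2).toNNReal (Set.Ioi (μ + σ*t)) ≤ ENNReal.ofReal δ := by
      by_cases hcase : 1 ≤ 4*L
      · have ht0' : 0 ≤ c - ε/(2*c) := by
          rw [sub_nonneg, div_le_iff₀ (by positivity : (0:ℝ) < 2*c)]; nlinarith
        have ht0 : 0 ≤ t := le_trans ht0' ht_ge
        refine (gauss_tail_right μ σ t hσ0 ht0).trans (ENNReal.ofReal_le_ofReal ?_)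
        have ht2 : 2*L - ε ≤ t^2 := by
          have := numT c ε t hc0 ht0' ht_ge
          linarith
        exact numA L t ε δ hε1 hδ0 hexpnegL ht2
      · push_neg at hcase
        have hδ15 : 15/16 ≤ δ := numB1 δ L hexpnegL hcase
        by_cases ht0 : 0 ≤ t
        · refine (gauss_tail_right μ σ t hσ0 ht0).trans (ENNReal.ofReal_le_ofReal ?_)
          have h1 : Real.exp (-t^2/2) ≤ 1 := Real.exp_le_one_iff.mpr (by nlinarith)
          linarith
        · push_neg at ht0
          refine (gauss_tail_right_neg μ σ t hσ0 ht0.le).trans (ENNReal.ofReal_le_ofReal ?_)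
          have hLlog : 1/5 ≤ L := numLlog δ L hδ0 hδ1 hLdef
          have hc6 : 3/5 ≤ c := by nlinarith
          exact numB2 t c ε δ hc0 hc6 hε1 hε0 ht_ge hδ15
    have hbad : gaussianReal μ (σ^2).toNNReal
        {x | Real.exp ε * gaussianPDFReal μ' (σ^2).toNNReal x
          < gaussianPDFReal μ (σ^2).toNNReal x} ≤ ENNReal.ofReal δ := by
      rcases abs_cases (μ - μ') with ⟨hb1, hb2⟩ | ⟨hb1, hb2⟩
      · have hb' : b = μ - μ' := hbdef.trans hb1
        have hsub : {x | Real.exp ε * gaussianPDFReal μ' (σ^2).toNNReal x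
            < gaussianPDFReal μ (σ^2).toNNReal x} ⊆ Set.Ioi (μ + σ*t) := by
          intro x hx
          have h := bad_subset μ μ' σ ε hσ0 x hx
          simp only [Set.mem_Ioi]
          have hexp : (x - μ')^2 - (x - μ)^2 = b^2 + 2*b*(x - μ) := by
            rw [hb']; ring
          rw [hexp] at h
          exact sub1 b σ ε t x μ hb0 hσ0 hσt h
        exact (measure_mono hsub).trans hnum
      · have hb' : b = μ' - μ := by rw [hbdef, hb1]; ring
        have hsub : {x | Real.exp ε * gaussianPDFReal μ' (σ^2).toNNReal x
            < gaussianPDFReal μ (σ^2).toNNReal x} ⊆ Set.Iio (μ - σ*t) := by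
          intro x hx
          have h := bad_subset μ μ' σ ε hσ0 x hx
          simp only [Set.mem_Iio]
          have hexp : (x - μ')^2 - (x - μ)^2 = b^2 - 2*b*(x - μ) := by
            rw [hb']; ring
          rw [hexp] at h
          exact sub2 b σ ε t x μ hb0 hσ0 hσt h
        refine (measure_mono hsub).trans ?_
        rw [gauss_sym μ _ (σ*t)]
        exact hnum
    exact dp_split μ μ' (σ^2).toNNReal hv ε δ s hbad
end

section
/- Privacy amplification by subsampling: if M is (ε, δ)-differentially private, then the mechanism that first selects each record into a subsample independently with probability γ = B/N and then applies M to the subsample is (ln(1 + γ(e^ε − 1)), γδ)-differentially private; in particular since ln(1 + γ(e^ε − 1)) ≤ γ(e^ε - 1) ≤ γ·ε·e^ε, for small ε the amplified parameter is at most γε·e^ε. -/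
open MeasureTheory
open scoped ENNReal NNReal

/-- Two (possibly subsampled) datasets are adjacent if they agree except in one record. -/
def AdjOne {ι R : Type*} (x x' : ι → R) : Prop :=
  ∃ i : ι, ∀ j : ι, j ≠ i → x j = x' j

private lemma dp_key_ineq (g E A A' C D : ℝ≥0∞) (hg : g ≤ 1) (hE : 1 ≤ E)
    (h1 : A ≤ E * C + D) (h2 : A ≤ E * A' + D) :
    g * A + (1 - g) * C ≤ ((1 - g) + g * E) * (g * A' + (1 - g) * C) + g * D := by
  set g' := 1 - g with hg'
  have hgg' : g + g' = 1 := add_tsub_cancel_of_le hg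
  rcases le_total C A' with hCA' | hA'C
  · calc g * A + g' * C ≤ g * (E * C + D) + g' * C := by gcongr
      _ = (g' + g * E) * C + g * D := by ring
      _ ≤ (g' + g * E) * (g * A' + g' * C) + g * D := by
          gcongr
          calc C = g * C + g' * C := by rw [← add_mul, hgg', one_mul]
            _ ≤ g * A' + g' * C := by gcongr
  · calc g * A + g' * C ≤ g * (E * A' + D) + g' * C := by gcongr
      _ = (g * (E * A') + g' * C) + g * D := by ring
      _ ≤ (g' + g * E) * (g * A' + g' * C) + g * D := by
          gcongr ?_ + g * D
          have hsplit : g * (E * A') + g' * C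
              = g * g * (E * A') + g * g' * (E * A') + (g * g' * C + g' * g' * C) := by
            have h1 : g * (E * A') = (g + g') * (g * (E * A')) := by rw [hgg', one_mul]
            have h2 : g' * C = (g + g') * (g' * C) := by rw [hgg', one_mul]
            rw [h1, h2]; ring
          rw [hsplit]
          have hmid : g * g' * (E * A') + g * g' * C ≤ g * g' * A' + g * g' * (E * C) := by
            have hE' : E * A' + C ≤ A' + E * C := by
              obtain ⟨F, hF⟩ : ∃ F, E = 1 + F := ⟨E - 1, (add_tsub_cancel_of_le hE).symm⟩
              subst hF
              calc (1 + F) * A' + C = A' + (F * A' + C) := by ring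
                _ ≤ A' + (F * C + C) := by gcongr
                _ = A' + (1 + F) * C := by ring
            calc g * g' * (E * A') + g * g' * C = g * g' * (E * A' + C) := by ring
              _ ≤ g * g' * (A' + E * C) := by gcongr
              _ = g * g' * A' + g * g' * (E * C) := by ring
          calc g * g * (E * A') + g * g' * (E * A') + (g * g' * C + g' * g' * C)
              = g * g * (E * A') + (g * g' * (E * A') + g * g' * C) + g' * g' * C := by ring
            _ ≤ g * g * (E * A') + (g * g' * A' + g * g' * (E * C)) + g' * g' * C := by gcongr
            _ = (g' + g * E) * (g * A' + g' * C) := by ring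

open Classical in
private noncomputable def embF {ι : Type*} (i : ι) (p : Bool × ({j : ι // j ≠ i} → Bool)) : ι → Bool :=
  fun j => if h : j = i then p.1 else p.2 ⟨j, h⟩

/-- Privacy amplification by Poisson subsampling: if `M` is `(ε,δ)`-DP (on datasets of
optional records, where a record may be absent), then the mechanism that first includes
each record independently with probability `γ = B/N` and then applies `M` to the
subsample is `(ln(1 + γ(e^ε − 1)), γδ)`-DP; moreover
`ln(1 + γ(e^ε − 1)) ≤ γ·ε·e^ε`. -/
theorem dp_subsampling {ι R S : Type*} [Fintype ι] [MeasurableSpace S]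
    (M : (ι → Option R) → Measure S) (ε δ γ : ℝ) (B N : ℕ)
    (hN : 0 < N) (hγdef : γ = (B : ℝ) / N) (hγpos : 0 < γ) (hγlt : γ < 1)
    (hε : 0 ≤ ε)
    (hDP : IsDP AdjOne M ε δ) :
    IsDP AdjOne
      (fun x : ι → R =>
        (Measure.pi fun _ : ι =>
            (PMF.bernoulli (Real.toNNReal γ)
              (Real.toNNReal_le_one.mpr hγlt.le)).toMeasure).bind
          (fun b : ι → Bool => M (fun i => if b i then some (x i) else none)))
      (Real.log (1 + γ * (Real.exp ε - 1))) (γ * δ) ∧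
    Real.log (1 + γ * (Real.exp ε - 1)) ≤ γ * ε * Real.exp ε := by
  classical
  have hexp1 : (1:ℝ) ≤ Real.exp ε := Real.one_le_exp hε
  have hpos : (0:ℝ) < 1 + γ * (Real.exp ε - 1) := by nlinarith
  have hlog : Real.log (1 + γ * (Real.exp ε - 1)) ≤ γ * ε * Real.exp ε := by
    have h1 : Real.log (1 + γ * (Real.exp ε - 1)) ≤ γ * (Real.exp ε - 1) := by
      have := Real.log_le_sub_one_of_pos hpos
      linarith
    have hmul : Real.exp (-ε) * Real.exp ε = 1 := by
      rw [← Real.exp_add]; simp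
    have h2 : Real.exp ε - 1 ≤ ε * Real.exp ε := by
      nlinarith [Real.add_one_le_exp (-ε), Real.exp_pos ε]
    nlinarith
  refine ⟨?_, hlog⟩
  intro s hs x x' hadj
  obtain ⟨i, hxx'⟩ := hadj
  -- abbreviations
  set g : ℝ≥0∞ := ENNReal.ofReal γ with hgdef
  have hγ1 : g ≤ 1 := ENNReal.ofReal_le_one.mpr hγlt.le
  set E := ENNReal.ofReal (Real.exp ε) with hEdef
  set D := ENNReal.ofReal δ with hDdef
  have hE1 : (1:ℝ≥0∞) ≤ E := by
    rw [hEdef, ← ENNReal.ofReal_one]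
    exact ENNReal.ofReal_le_ofReal hexp1
  set μB := (PMF.bernoulli (Real.toNNReal γ) (Real.toNNReal_le_one.mpr hγlt.le)).toMeasure with hμB
  set c : Bool → ℝ≥0∞ := fun v => bif v then g else 1 - g with hc
  -- Step 1: bind as a finite sum
  have hbind : ∀ y : ι → R,
      ((Measure.pi fun _ : ι => μB).bind
          (fun b : ι → Bool => M (fun i => if b i then some (y i) else none))) s
        = ∑ b : ι → Bool, (∏ j, c (b j)) * M (fun i => if b i then some (y i) else none) s := by
    intro y
    rw [Measure.bind_apply hs (measurable_of_finite _).aemeasurable, lintegral_fintype]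
    refine Finset.sum_congr rfl fun b _ => ?_
    rw [mul_comm]
    congr 1
    rw [← Set.univ_pi_singleton b, Measure.pi_pi]
    refine Finset.prod_congr rfl fun j _ => ?_
    rw [PMF.toMeasure_apply_singleton _ _ (measurableSet_singleton _), PMF.bernoulli_apply]
    cases b j <;> simp [hc, hgdef, ENNReal.ofReal, ENNReal.coe_sub]
  -- the splitting bijection
  have hembi : ∀ p : Bool × ({j : ι // j ≠ i} → Bool), embF i p i = p.1 :=
    fun p => dif_pos rfl
  have hembj : ∀ (p : Bool × ({j : ι // j ≠ i} → Bool)) (j : ι) (h : j ≠ i),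
      embF i p j = p.2 ⟨j, h⟩ := fun p j h => dif_neg h
  have hbij : Function.Bijective (embF i) := by
    constructor
    · rintro ⟨v, r⟩ ⟨v', r'⟩ h
      have h1 : v = v' := by
        have := congrFun h i
        rwa [hembi, hembi] at this
      have h2 : r = r' := by
        funext j
        have := congrFun h j
        rwa [hembj _ _ j.2, hembj _ _ j.2] at this
      simp [h1, h2]
    · intro b
      refine ⟨(b i, fun j => b j), funext fun j => ?_⟩
      by_cases h : j = i
      · subst h; exact dif_pos rfl
      · exact dif_neg h
  set W : ({j : ι // j ≠ i} → Bool) → ℝ≥0∞ := fun r => ∏ j, c (r j) with hWdef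
  have hWfact : ∀ p : Bool × ({j : ι // j ≠ i} → Bool),
      (∏ j, c (embF i p j)) = c p.1 * W p.2 := by
    intro p
    rw [Fintype.prod_eq_mul_prod_compl i]
    congr 1
    · rw [hembi]
    · rw [Finset.prod_subtype (p := fun j => j ≠ i) ({i}ᶜ : Finset ι) (by simp) (fun j => c (embF i p j))]
      exact Finset.prod_congr rfl fun j _ => by rw [hembj _ _ j.2]
  have hW1 : ∑ r : {j : ι // j ≠ i} → Bool, W r = 1 := by
    calc ∑ r : {j : ι // j ≠ i} → Bool, W r
        = ∏ _j : {j : ι // j ≠ i}, ∑ v : Bool, c v :=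
          (Fintype.prod_sum fun (_ : {j : ι // j ≠ i}) (v : Bool) => c v).symm
      _ = 1 := by
          have hcv : ∑ v : Bool, c v = 1 := by
            rw [Fintype.sum_bool]
            show g + (1 - g) = 1
            exact add_tsub_cancel_of_le hγ1
          rw [Finset.prod_congr rfl fun j _ => hcv, Finset.prod_const_one]
  -- Step 2: split the sum according to the bit at `i`
  have hsplit : ∀ y : ι → R,
      (∑ b : ι → Bool, (∏ j, c (b j)) * M (fun i => if b i then some (y i) else none) s)
        = g * (∑ r, W r * M (fun j => if embF i (true, r) j then some (y j) else none) s)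
          + (1 - g) * (∑ r, W r * M (fun j => if embF i (false, r) j then some (y j) else none) s) := by
    intro y
    calc (∑ b : ι → Bool, (∏ j, c (b j)) * M (fun i => if b i then some (y i) else none) s)
        = ∑ p : Bool × ({j : ι // j ≠ i} → Bool),
            (∏ j, c (embF i p j)) * M (fun j => if embF i p j then some (y j) else none) s :=
          (Fintype.sum_bijective (embF i) hbij _ _ fun p => rfl).symm
      _ = ∑ v : Bool, ∑ r, (c v * W r) * M (fun j => if embF i (v, r) j then some (y j) else none) s := by
          rw [Fintype.sum_prod_type]
          exact Finset.sum_congr rfl fun v _ => Finset.sum_congr rfl fun r _ => by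
            rw [hWfact]
      _ = _ := by
          rw [Fintype.sum_bool]
          congr 1
          · rw [Finset.mul_sum]
            exact Finset.sum_congr rfl fun r _ => by
              show c true * W r * _ = g * (W r * _)
              rw [mul_assoc]; rfl
          · rw [Finset.mul_sum]
            exact Finset.sum_congr rfl fun r _ => by
              show c false * W r * _ = (1 - g) * (W r * _)
              rw [mul_assoc]; rfl
  -- the three per-`r` datasets and their relations
  have hzz : ∀ r : {j : ι // j ≠ i} → Bool,
      (fun j => if embF i (false, r) j then some (x j) else none)
        = (fun j => if embF i (false, r) j then some (x' j) else none) := by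
    intro r
    funext j
    by_cases h : j = i
    · subst h
      rw [hembi]
      simp
    · rw [hxx' j h]
  have hyz : ∀ r : {j : ι // j ≠ i} → Bool,
      AdjOne (fun j => if embF i (true, r) j then some (x j) else none)
        (fun j => if embF i (false, r) j then some (x j) else none) := by
    intro r
    exact ⟨i, fun j hj => by simp only [hembj (true, r) j hj, hembj (false, r) j hj]⟩
  have hyy' : ∀ r : {j : ι // j ≠ i} → Bool,
      AdjOne (fun j => if embF i (true, r) j then some (x j) else none)
        (fun j => if embF i (true, r) j then some (x' j) else none) := by
    intro r
    exact ⟨i, fun j hj => by simp only [hxx' j hj]⟩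
  -- the three aggregated quantities
  set A := ∑ r, W r * M (fun j => if embF i (true, r) j then some (x j) else none) s with hA
  set A' := ∑ r, W r * M (fun j => if embF i (true, r) j then some (x' j) else none) s with hA'
  set C := ∑ r, W r * M (fun j => if embF i (false, r) j then some (x j) else none) s with hC
  have hsum_le : ∀ (F G : ({j : ι // j ≠ i} → Bool) → ℝ≥0∞),
      (∀ r, F r ≤ E * G r + D) →
      (∑ r, W r * F r) ≤ E * (∑ r, W r * G r) + D := by
    intro F G h
    calc (∑ r, W r * F r) ≤ ∑ r, W r * (E * G r + D) :=
          Finset.sum_le_sum fun r _ => mul_le_mul_right (h r) _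
      _ = ∑ r, (E * (W r * G r) + D * W r) :=
          Finset.sum_congr rfl fun r _ => by ring
      _ = E * (∑ r, W r * G r) + D * ∑ r, W r := by
          rw [Finset.sum_add_distrib, ← Finset.mul_sum, ← Finset.mul_sum]
      _ = E * (∑ r, W r * G r) + D := by rw [hW1, mul_one]
  have hAC : A ≤ E * C + D :=
    hsum_le _ _ fun r => hDP s hs _ _ (hyz r)
  have hAA' : A ≤ E * A' + D :=
    hsum_le _ _ fun r => hDP s hs _ _ (hyy' r)
  have hCC' : C = ∑ r, W r * M (fun j => if embF i (false, r) j then some (x' j) else none) s :=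
    Finset.sum_congr rfl fun r _ => by rw [hzz r]
  -- assemble
  have e1 : ((Measure.pi fun _ : ι => μB).bind
      (fun b : ι → Bool => M (fun i => if b i then some (x i) else none))) s
        = g * A + (1 - g) * C := by rw [hbind, hsplit]
  have e1' : ((Measure.pi fun _ : ι => μB).bind
      (fun b : ι → Bool => M (fun i => if b i then some (x' i) else none))) s
        = g * A' + (1 - g) * C := by rw [hbind, hsplit, hCC']
  have hE'eq : ENNReal.ofReal (Real.exp (Real.log (1 + γ * (Real.exp ε - 1))))
      = (1 - g) + g * E := by
    rw [Real.exp_log hpos]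
    have hr : 1 + γ * (Real.exp ε - 1) = (1 - γ) + γ * Real.exp ε := by ring
    rw [hr, ENNReal.ofReal_add (by linarith) (by positivity),
      ENNReal.ofReal_sub _ hγpos.le, ENNReal.ofReal_one, ENNReal.ofReal_mul hγpos.le]
  have hδeq : ENNReal.ofReal (γ * δ) = g * D := ENNReal.ofReal_mul hγpos.le
  have main := dp_key_ineq g E A A' C D hγ1 hE1 hAC hAA'
  rw [← e1, ← e1'] at main
  calc ((Measure.pi fun _ : ι => μB).bind
      (fun b : ι → Bool => M (fun i => if b i then some (x i) else none))) s
      ≤ ((1 - g) + g * E) * (((Measure.pi fun _ : ι => μB).bind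
          (fun b : ι → Bool => M (fun i => if b i then some (x' i) else none))) s) + g * D := main
    _ = _ := by rw [← hE'eq, ← hδeq]
end
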